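/- Let E be a standard Borel space, (F, 𝓕) a measurable space, and T : E → F measurable and surjective. If K is a transition kernel on E that is reversible with respect to a probability measure π on E, then the pushforward transition kernel T_*K is reversible with respect to the pushforward measure T_*π, i.e., for all A, B ∈ 𝓕 one has ∫_A T_*K(y, B) T_*π(dy) = ∫_B T_*K(y, A) T_*π(dy). -/

import Mathlib

open MeasureTheory ProbabilityTheory
open scoped ENNReal NNReal

/-- The pushforward transition kernel `T_*K(y, B) := E[K(X, T⁻¹(B)) | T(X) = y]`, `X ∼ π`,
realized via a regular conditional distribution `condDistrib id T π` of `X` given `T(X)`. -/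
noncomputable def pushKernel {E F : Type*} [MeasurableSpace E] [StandardBorelSpace E] [Nonempty E]
    [MeasurableSpace F] (T : E → F) (π : Measure E) [IsFiniteMeasure π] (K : Kernel E E) :
    Kernel F F :=
  Kernel.map (K ∘ₖ condDistrib id T π) T

/-- A transition kernel `K` is reversible w.r.t. `π` if the measure `ν_K(dx dx') := K(x, dx') π(dx)`
on `E × E` is invariant under the coordinate swap `(x, x') ↦ (x', x)`. -/
def IsReversible {E : Type*} [MeasurableSpace E] (π : Measure E) (K : Kernel E E) : Prop :=
  (π ⊗ₘ K).map Prod.swap = π ⊗ₘ K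

/-- If `K` is reversible w.r.t. the probability measure `π` on the standard Borel
space `E`, and `T : E → F` is measurable and surjective, then the pushforward kernel `T_*K` is
reversible w.r.t. `T_*π`: for all measurable `A, B ⊆ F`,
`∫_A T_*K(y, B) T_*π(dy) = ∫_B T_*K(y, A) T_*π(dy)`. -/
theorem pushKernel_reversible
    {E F : Type*} [MeasurableSpace E] [StandardBorelSpace E] [Nonempty E] [MeasurableSpace F]
    (T : E → F) (hT : Measurable T) (hTsurj : Function.Surjective T)
    (π : Measure E) [IsProbabilityMeasure π] (K : Kernel E E) [IsMarkovKernel K]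
    (hrev : IsReversible π K) :
    ∀ A B : Set F, MeasurableSet A → MeasurableSet B →
      ∫⁻ y in A, pushKernel T π K y B ∂(π.map T)
        = ∫⁻ y in B, pushKernel T π K y A ∂(π.map T) := by
  -- the disintegration identity: `(π.map T) ⊗ₘ condDistrib id T π = π.map (fun a => (T a, a))`
  have hdis : (π.map T) ⊗ₘ condDistrib id T π = π.map (fun a => (T a, a)) := by
    rw [condDistrib]
    have hfst : (π.map fun a => (T a, (id a : E))).fst = π.map T :=
      Measure.fst_map_prodMk₀ aemeasurable_id
    conv_lhs => rw [← hfst]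
    exact Measure.disintegrate _ _
  -- key formula
  have key : ∀ (A : Set F) (S : Set E), MeasurableSet A → MeasurableSet S →
      ∫⁻ y in A, (K ∘ₖ condDistrib id T π) y S ∂(π.map T)
        = (π ⊗ₘ K) ((T ⁻¹' A) ×ˢ S) := by
    intro A S hA hS
    rw [Measure.compProd_apply_prod (hT hA) hS]
    have h1 : ∀ y, (K ∘ₖ condDistrib id T π) y S
        = ∫⁻ x, K x S ∂(condDistrib id T π y) := by
      intro y
      rw [Kernel.comp_apply' _ _ _ hS]
    simp_rw [h1]
    have h2 : ∫⁻ y in A, ∫⁻ x, K x S ∂(condDistrib id T π y) ∂(π.map T)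
        = ∫⁻ p, (A ×ˢ Set.univ : Set (F × E)).indicator (fun p => K p.2 S) p
            ∂((π.map T) ⊗ₘ condDistrib id T π) := by
      rw [Measure.lintegral_compProd]
      · rw [← lintegral_indicator hA]
        congr 1
        ext y
        by_cases hy : y ∈ A
        · simp [hy, Set.indicator_of_mem, Set.mk_mem_prod]
        · simp [hy]
      · exact (Kernel.measurable_coe K hS).comp measurable_snd
          |>.indicator ((hA.prod MeasurableSet.univ))
    rw [h2, hdis, lintegral_map, ← lintegral_indicator (hT hA)]
    · congr 1
      ext a
      by_cases ha : T a ∈ A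
      · simp [ha, Set.indicator_of_mem]
      · simp [ha]
    · exact ((Kernel.measurable_coe K hS).comp measurable_snd).indicator
        (hA.prod MeasurableSet.univ)
    · exact hT.prodMk measurable_id
  intro A B hA hB
  have hpush : ∀ (A B : Set F), MeasurableSet A → MeasurableSet B →
      ∫⁻ y in A, pushKernel T π K y B ∂(π.map T) = (π ⊗ₘ K) ((T ⁻¹' A) ×ˢ (T ⁻¹' B)) := by
    intro A B hA hB
    have : ∀ y, pushKernel T π K y B = (K ∘ₖ condDistrib id T π) y (T ⁻¹' B) := by
      intro y
      rw [pushKernel, Kernel.map_apply' _ hT _ hB]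
    simp_rw [this]
    exact key A (T ⁻¹' B) hA (hT hB)
  rw [hpush A B hA hB, hpush B A hB hA]
  have := hrev
  rw [IsReversible] at this
  calc (π ⊗ₘ K) ((T ⁻¹' A) ×ˢ (T ⁻¹' B))
      = ((π ⊗ₘ K).map Prod.swap) ((T ⁻¹' B) ×ˢ (T ⁻¹' A)) := by
        rw [Measure.map_apply measurable_swap ((hT hB).prod (hT hA))]
        congr 1
        ext p
        simp [Set.mem_prod, and_comm]
    _ = (π ⊗ₘ K) ((T ⁻¹' B) ×ˢ (T ⁻¹' A)) := by rw [this]
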